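/- Let H ⊆ F be complete sub-σ-algebras of a complete probability space and let X be a real-valued F-measurable random variable. Then almost surely: essinf_H X = inf supp_H X and esssup_H X = sup supp_H X; moreover essinf_H X ∈ supp_H X a.s. on the set {essinf_H X > −∞}, esssup_H X ∈ supp_H X a.s. on the set {esssup_H X < ∞}, and the convex hull of supp_H X equals [essinf_H X, esssup_H X] ∩ ℝ almost surely. -/

import Mathlib

open MeasureTheory Set Filter
open scoped Classical

noncomputable section

/-- Scalar product on `ℝ^d`. -/
def dotp {d : ℕ} (a b : Fin d → ℝ) : ℝ := ∑ i, a i * b i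

/-- `κ` is a regular version of the conditional law of `X` knowing the σ-algebra `H`. -/
structure CondLaw {Ω : Type*} (H : MeasurableSpace Ω) {mΩ : MeasurableSpace Ω}
    (μ : Measure Ω) {E : Type*} [MeasurableSpace E] (X : Ω → E) (κ : Ω → Measure E) :
    Prop where
  isProb : ∀ ω, IsProbabilityMeasure (κ ω)
  meas : ∀ A : Set E, MeasurableSet A → Measurable[H] fun ω => κ ω A
  law : ∀ A : Set E, MeasurableSet A → ∀ B : Set Ω, MeasurableSet[H] B →
    ∫⁻ ω in B, κ ω A ∂μ = μ (B ∩ X ⁻¹' A)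

/-- The support of the measure `κ ω`: the intersection of all closed sets of full
measure (for a regular conditional law this is the conditional support). -/
def condSupp {Ω E : Type*} [TopologicalSpace E] [MeasurableSpace E]
    (κ : Ω → Measure E) (ω : Ω) : Set E :=
  ⋂₀ {A : Set E | IsClosed A ∧ κ ω A = 1}

/-- `γ` is (a version of) the conditional essential supremum of `X` knowing `H`. -/
def IsCondEssSup {Ω : Type*} (H : MeasurableSpace Ω) {mΩ : MeasurableSpace Ω}
    (μ : Measure Ω) (X : Ω → ℝ) (γ : Ω → EReal) : Prop :=
  Measurable[H] γ ∧ (∀ᵐ ω ∂μ, (X ω : EReal) ≤ γ ω) ∧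
    ∀ ζ : Ω → EReal, Measurable[H] ζ → (∀ᵐ ω ∂μ, (X ω : EReal) ≤ ζ ω) →
      ∀ᵐ ω ∂μ, γ ω ≤ ζ ω

/-- `γ` is (a version of) the conditional essential infimum of `X` knowing `H`. -/
def IsCondEssInf {Ω : Type*} (H : MeasurableSpace Ω) {mΩ : MeasurableSpace Ω}
    (μ : Measure Ω) (X : Ω → ℝ) (γ : Ω → EReal) : Prop :=
  Measurable[H] γ ∧ (∀ᵐ ω ∂μ, γ ω ≤ (X ω : EReal)) ∧
    ∀ ζ : Ω → EReal, Measurable[H] ζ → (∀ᵐ ω ∂μ, ζ ω ≤ (X ω : EReal)) →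
      ∀ᵐ ω ∂μ, ζ ω ≤ γ ω

/-- `p` is (a version of) the essential infimum of the family `S` of random variables. -/
def IsEssInfSet {Ω : Type*} {mΩ : MeasurableSpace Ω} (μ : Measure Ω)
    (S : Set (Ω → ℝ)) (p : Ω → EReal) : Prop :=
  Measurable[mΩ] p ∧ (∀ f ∈ S, ∀ᵐ ω ∂μ, p ω ≤ (f ω : EReal)) ∧
    ∀ ζ : Ω → EReal, Measurable[mΩ] ζ → (∀ f ∈ S, ∀ᵐ ω ∂μ, ζ ω ≤ (f ω : EReal)) →
      ∀ᵐ ω ∂μ, ζ ω ≤ p ω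

/-- The set of super-hedging prices of the claim `Z` in the one-period market `(y, Y)`. -/
def Prices {Ω : Type*} (H : MeasurableSpace Ω) {mΩ : MeasurableSpace Ω} (μ : Measure Ω)
    {d : ℕ} (y Y : Ω → Fin d → ℝ) (Z : Ω → ℝ) : Set (Ω → ℝ) :=
  {x | Measurable[H] x ∧ ∃ θ : Ω → Fin d → ℝ, Measurable[H] θ ∧
    ∀ᵐ ω ∂μ, Z ω ≤ x ω + dotp (θ ω) fun i => Y ω i - y ω i}

/-- One-dimensional version of `Prices`. -/
def Prices1 {Ω : Type*} (H : MeasurableSpace Ω) {mΩ : MeasurableSpace Ω} (μ : Measure Ω)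
    (y Y : Ω → ℝ) (Z : Ω → ℝ) : Set (Ω → ℝ) :=
  {x | Measurable[H] x ∧ ∃ θ : Ω → ℝ, Measurable[H] θ ∧
    ∀ᵐ ω ∂μ, Z ω ≤ x ω + θ ω * (Y ω - y ω)}

/-- One-period super-hedging prices of the zero claim in the market extended by the
additional asset `(pZ, Z)`. -/
def PricesExt {Ω : Type*} (H : MeasurableSpace Ω) {mΩ : MeasurableSpace Ω} (μ : Measure Ω)
    {d : ℕ} (y Y : Ω → Fin d → ℝ) (Z pZ : Ω → ℝ) : Set (Ω → ℝ) :=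
  {x | Measurable[H] x ∧ ∃ α : Ω → ℝ, Measurable[H] α ∧ ∃ θ : Ω → Fin d → ℝ,
    Measurable[H] θ ∧
    ∀ᵐ ω ∂μ, 0 ≤ x ω + α ω * (Z ω - pZ ω) + dotp (θ ω) fun i => Y ω i - y ω i}

/-- The function `f = -g + δ_{D}` of the paper, valued in `EReal`. -/
def fObj {Ω : Type*} {d : ℕ} (g : Ω → (Fin d → ℝ) → ℝ) (D : Ω → Set (Fin d → ℝ))
    (ω : Ω) (z : Fin d → ℝ) : EReal :=
  if z ∈ D ω then ((-(g ω z) : ℝ) : EReal) else ⊤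

/-- Fenchel–Legendre conjugate of an `EReal`-valued function on `ℝ^d`. -/
def eConj {d : ℕ} (f : (Fin d → ℝ) → EReal) (x : Fin d → ℝ) : EReal :=
  ⨆ z : Fin d → ℝ, ((dotp x z : ℝ) : EReal) - f z

/-- Convex-analytic indicator function `δ_s`. -/
def indicatorE {E : Type*} (s : Set E) (x : E) : EReal := if x ∈ s then 0 else ⊤

/-- Relative concave envelope of `g` with respect to `D`. -/
def concEnv {d : ℕ} (g : (Fin d → ℝ) → ℝ) (D : Set (Fin d → ℝ)) (x : Fin d → ℝ) : EReal :=
  ⨅ v ∈ {v : (Fin d → ℝ) → ℝ | ConcaveOn ℝ univ v ∧ ∀ z ∈ D, g z ≤ v z}, ((v x : ℝ) : EReal)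

/-- Upper semicontinuous closure of an `EReal`-valued function. -/
def usClosure {E : Type*} [TopologicalSpace E] (F : E → EReal) (x : E) : EReal :=
  Filter.limsup F (nhds x)

/-- The slope `θ^*` of Corollary 2.19, with the conventions of the paper. -/
def thetaStar (g : ℝ → ℝ) (M I : ℝ) (S : EReal) : ℝ :=
  if S = (I : EReal) then 0 else if S = ⊤ then M
  else (g S.toReal - g I) / (S.toReal - I)

/-- Multi-period super-hedging prices at time `t` of the claim `g` paid at time `T`. -/
def PricesMulti {Ω : Type*} {mΩ : MeasurableSpace Ω} (𝓕 : ℕ → MeasurableSpace Ω)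
    (μ : Measure Ω) {d : ℕ} (S : ℕ → Ω → Fin d → ℝ) (t T : ℕ) (g : Ω → ℝ) :
    Set (Ω → ℝ) :=
  {x | Measurable[𝓕 t] x ∧ ∃ θ : ℕ → Ω → Fin d → ℝ, (∀ u, Measurable[𝓕 u] (θ u)) ∧
    ∃ ε : Ω → ℝ, Measurable[𝓕 T] ε ∧ (∀ᵐ ω ∂μ, 0 ≤ ε ω) ∧
    ∀ᵐ ω ∂μ, x ω + (∑ u ∈ Finset.Icc (t+1) T,
      dotp (θ (u-1) ω) fun i => S u ω i - S (u-1) ω i) - ε ω = g ω}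

/-- One-step super-hedging prices at time `t` of the (extended-real) claim `G`
paid at time `t+1`. -/
def OneStepPrices {Ω : Type*} {mΩ : MeasurableSpace Ω} (𝓕 : ℕ → MeasurableSpace Ω)
    (μ : Measure Ω) {d : ℕ} (S : ℕ → Ω → Fin d → ℝ) (t : ℕ) (G : Ω → EReal) :
    Set (Ω → ℝ) :=
  {x | Measurable[𝓕 t] x ∧ ∃ θ : Ω → Fin d → ℝ, Measurable[𝓕 t] θ ∧
    ∀ᵐ ω ∂μ, G ω ≤ ((x ω + dotp (θ ω) fun i => S (t+1) ω i - S t ω i : ℝ) : EReal)}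

/-- Multi-period super-hedging prices in the market extended by the additional asset `C`. -/
def PricesMultiExt {Ω : Type*} {mΩ : MeasurableSpace Ω} (𝓕 : ℕ → MeasurableSpace Ω)
    (μ : Measure Ω) {d : ℕ} (S : ℕ → Ω → Fin d → ℝ) (C : ℕ → Ω → ℝ) (t T : ℕ)
    (g : Ω → ℝ) : Set (Ω → ℝ) :=
  {x | Measurable[𝓕 t] x ∧ ∃ θ : ℕ → Ω → Fin d → ℝ, (∀ u, Measurable[𝓕 u] (θ u)) ∧
    ∃ α : ℕ → Ω → ℝ, (∀ u, Measurable[𝓕 u] (α u)) ∧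
    ∃ ε : Ω → ℝ, Measurable[𝓕 T] ε ∧ (∀ᵐ ω ∂μ, 0 ≤ ε ω) ∧
    ∀ᵐ ω ∂μ, x ω + (∑ u ∈ Finset.Icc (t+1) T,
      ((dotp (θ (u-1) ω) fun i => S u ω i - S (u-1) ω i) +
        α (u-1) ω * (C u ω - C (u-1) ω))) - ε ω = g ω}

/-- The set `R_t^T` of claims super-replicable at zero cost, one-dimensional case. -/
def RsetM {Ω : Type*} {mΩ : MeasurableSpace Ω} (𝓕 : ℕ → MeasurableSpace Ω)
    (μ : Measure Ω) (S : ℕ → Ω → ℝ) (t T : ℕ) : Set (Ω → ℝ) :=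
  {X | ∃ θ : ℕ → Ω → ℝ, (∀ u, Measurable[𝓕 u] (θ u)) ∧
    ∃ ε : Ω → ℝ, Measurable[𝓕 T] ε ∧ (∀ᵐ ω ∂μ, 0 ≤ ε ω) ∧
    ∀ᵐ ω ∂μ, X ω = (∑ u ∈ Finset.Icc (t+1) T, θ (u-1) ω * (S u ω - S (u-1) ω)) - ε ω}

/-- Closure with respect to convergence in probability. -/
def closureP {Ω : Type*} {mΩ : MeasurableSpace Ω} (μ : Measure Ω) (A : Set (Ω → ℝ)) :
    Set (Ω → ℝ) :=
  {X | ∃ f : ℕ → Ω → ℝ, (∀ n, f n ∈ A) ∧ TendstoInMeasure μ f Filter.atTop X}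



def msupp (ν : Measure ℝ) : Set ℝ := ⋂₀ {A : Set ℝ | IsClosed A ∧ ν A = 1}

variable (ν : Measure ℝ) [IsProbabilityMeasure ν]

lemma msupp_closed : IsClosed (msupp ν) := isClosed_sInter fun A hA => hA.1

lemma mem_msupp_iff {x : ℝ} :
    x ∈ msupp ν ↔ ∀ U : Set ℝ, IsOpen U → x ∈ U → ν U ≠ 0 := by
  constructor
  · intro hx U hU hxU h0
    have h1 : ν Uᶜ = 1 := (prob_compl_eq_one_iff hU.measurableSet).2 h0
    exact (hx Uᶜ ⟨hU.isClosed_compl, h1⟩) hxU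
  · intro h A hA
    by_contra hxA
    exact h Aᶜ hA.1.isOpen_compl hxA ((prob_compl_eq_zero_iff hA.1.measurableSet).2 hA.2)

lemma not_mem_msupp_iff {x : ℝ} :
    x ∉ msupp ν ↔ ∃ p q : ℚ, x ∈ Ioo (p : ℝ) q ∧ ν (Ioo (p : ℝ) q) = 0 := by
  rw [mem_msupp_iff]
  constructor
  · intro h
    push_neg at h
    obtain ⟨U, hU, hxU, h0⟩ := h
    obtain ⟨a, b, hab, hsub⟩ := (mem_nhds_iff_exists_Ioo_subset).1 (hU.mem_nhds hxU)
    obtain ⟨p, hp1, hp2⟩ := exists_rat_btwn hab.1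
    obtain ⟨q, hq1, hq2⟩ := exists_rat_btwn hab.2
    refine ⟨p, q, ⟨hp2, hq1⟩, ?_⟩
    exact measure_mono_null (fun y hy => hsub ⟨hp1.trans hy.1, hy.2.trans hq2⟩) h0
  · rintro ⟨p, q, hx, h0⟩ h
    exact h (Ioo (p : ℝ) q) isOpen_Ioo hx h0

lemma msupp_compl_null : ν (msupp ν)ᶜ = 0 := by
  have hsub : (msupp ν)ᶜ ⊆ ⋃ (r : ℚ × ℚ) (_ : ν (Ioo (r.1 : ℝ) r.2) = 0), Ioo (r.1 : ℝ) r.2 := by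
    intro x hx
    obtain ⟨p, q, hmem, h0⟩ := (not_mem_msupp_iff ν).1 hx
    exact mem_iUnion.2 ⟨(p, q), mem_iUnion.2 ⟨h0, hmem⟩⟩
  exact measure_mono_null hsub (measure_iUnion_null fun r => measure_iUnion_null fun h => h)

lemma msupp_nonempty : (msupp ν).Nonempty := by
  by_contra h
  rw [Set.not_nonempty_iff_eq_empty] at h
  have := msupp_compl_null ν
  rw [h, Set.compl_empty, measure_univ] at this
  exact one_ne_zero this

def gI (ν : Measure ℝ) (q : ℚ) : EReal := if ν (Iio (q : ℝ)) = 0 then ⊤ else ((q : ℝ) : EReal)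
def gS (ν : Measure ℝ) (q : ℚ) : EReal := if ν (Ioi (q : ℝ)) = 0 then ⊥ else ((q : ℝ) : EReal)

lemma sInf_msupp_eq : sInf (Real.toEReal '' msupp ν) = ⨅ q : ℚ, gI ν q := by
  apply le_antisymm
  · refine le_iInf fun q => ?_
    unfold gI
    split_ifs with h
    · exact le_top
    · have hne : (msupp ν ∩ Iio (q : ℝ)).Nonempty := by
        by_contra hne
        rw [Set.not_nonempty_iff_eq_empty] at hne
        refine h (measure_mono_null (fun y hy => ?_) (msupp_compl_null ν))
        intro hy2
        exact absurd (Set.eq_empty_iff_forall_notMem.1 hne y ⟨hy2, hy⟩) (fun c => c)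
      obtain ⟨x, hx, hxq⟩ := hne
      exact (sInf_le (mem_image_of_mem Real.toEReal hx)).trans (EReal.coe_le_coe_iff.2 hxq.le)
  · refine le_sInf ?_
    rintro _ ⟨x, hx, rfl⟩
    rw [← EReal.le_of_forall_lt_iff_le]
    intro z hz
    obtain ⟨q, hq1, hq2⟩ := exists_rat_btwn (EReal.coe_lt_coe_iff.1 hz)
    have hν : ν (Iio (q : ℝ)) ≠ 0 := (mem_msupp_iff ν).1 hx _ isOpen_Iio hq1
    refine (iInf_le _ q).trans ?_
    rw [gI, if_neg hν]
    exact EReal.coe_le_coe_iff.2 hq2.le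

lemma sSup_msupp_eq : sSup (Real.toEReal '' msupp ν) = ⨆ q : ℚ, gS ν q := by
  apply le_antisymm
  · refine sSup_le ?_
    rintro _ ⟨x, hx, rfl⟩
    rw [← EReal.ge_of_forall_gt_iff_ge]
    intro z hz
    obtain ⟨q, hq1, hq2⟩ := exists_rat_btwn (EReal.coe_lt_coe_iff.1 hz)
    have hν : ν (Ioi (q : ℝ)) ≠ 0 := (mem_msupp_iff ν).1 hx _ isOpen_Ioi hq2
    refine le_trans ?_ (le_iSup _ q)
    rw [gS, if_neg hν]
    exact EReal.coe_le_coe_iff.2 hq1.le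
  · refine iSup_le fun q => ?_
    unfold gS
    split_ifs with h
    · exact bot_le
    · have hne : (msupp ν ∩ Ioi (q : ℝ)).Nonempty := by
        by_contra hne
        rw [Set.not_nonempty_iff_eq_empty] at hne
        refine h (measure_mono_null (fun y hy => ?_) (msupp_compl_null ν))
        intro hy2
        exact absurd (Set.eq_empty_iff_forall_notMem.1 hne y ⟨hy2, hy⟩) (fun c => c)
      obtain ⟨x, hx, hxq⟩ := hne
      exact (EReal.coe_le_coe_iff.2 hxq.le).trans (le_sSup (mem_image_of_mem Real.toEReal hx))

lemma ereal_eq_bot_of_le_all {a : EReal} (h : ∀ r : ℝ, a ≤ (r : EReal)) : a = ⊥ := by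
  induction a with
  | bot => rfl
  | coe r => exact absurd (EReal.coe_le_coe_iff.1 (h (r - 1))) (by linarith)
  | top => exact absurd (h 0) (by simp)

lemma ereal_eq_top_of_ge_all {a : EReal} (h : ∀ r : ℝ, (r : EReal) ≤ a) : a = ⊤ := by
  induction a with
  | bot => exact absurd (h 0) (by simp)
  | coe r => exact absurd (EReal.coe_le_coe_iff.1 (h (r + 1))) (by linarith)
  | top => rfl

lemma sInf_msupp_mem (h : sInf (Real.toEReal '' msupp ν) ≠ ⊥) :
    sInf (Real.toEReal '' msupp ν) ∈ Real.toEReal '' msupp ν := by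
  have hne := msupp_nonempty ν
  have hbdd : BddBelow (msupp ν) := by
    by_contra hb
    refine h (ereal_eq_bot_of_le_all fun r => ?_)
    obtain ⟨y, hy, hyr⟩ := not_bddBelow_iff.1 hb r
    exact (sInf_le (mem_image_of_mem Real.toEReal hy)).trans (EReal.coe_le_coe_iff.2 hyr.le)
  have hm : sInf (msupp ν) ∈ msupp ν := (msupp_closed ν).csInf_mem hne hbdd
  have heq : sInf (Real.toEReal '' msupp ν) = ((sInf (msupp ν) : ℝ) : EReal) := by
    apply le_antisymm (sInf_le (mem_image_of_mem Real.toEReal hm))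
    refine le_sInf ?_
    rintro _ ⟨x, hx, rfl⟩
    exact EReal.coe_le_coe_iff.2 (csInf_le hbdd hx)
  exact heq ▸ mem_image_of_mem Real.toEReal hm

lemma sSup_msupp_mem (h : sSup (Real.toEReal '' msupp ν) ≠ ⊤) :
    sSup (Real.toEReal '' msupp ν) ∈ Real.toEReal '' msupp ν := by
  have hne := msupp_nonempty ν
  have hbdd : BddAbove (msupp ν) := by
    by_contra hb
    refine h (ereal_eq_top_of_ge_all fun r => ?_)
    obtain ⟨y, hy, hyr⟩ := not_bddAbove_iff.1 hb r
    exact (EReal.coe_le_coe_iff.2 hyr.le).trans (le_sSup (mem_image_of_mem Real.toEReal hy))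
  have hm : sSup (msupp ν) ∈ msupp ν := (msupp_closed ν).csSup_mem hne hbdd
  have heq : sSup (Real.toEReal '' msupp ν) = ((sSup (msupp ν) : ℝ) : EReal) := by
    apply le_antisymm _ (le_sSup (mem_image_of_mem Real.toEReal hm))
    refine sSup_le ?_
    rintro _ ⟨x, hx, rfl⟩
    exact EReal.coe_le_coe_iff.2 (le_csSup hbdd hx)
  exact heq ▸ mem_image_of_mem Real.toEReal hm

lemma hull_msupp_eq :
    convexHull ℝ (msupp ν)
      = {x : ℝ | sInf (Real.toEReal '' msupp ν) ≤ (x : EReal) ∧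
          (x : EReal) ≤ sSup (Real.toEReal '' msupp ν)} := by
  apply Subset.antisymm
  · refine convexHull_min (fun x hx => ?_) ?_
    · exact ⟨sInf_le (mem_image_of_mem Real.toEReal hx),
        le_sSup (mem_image_of_mem Real.toEReal hx)⟩
    · have hoc : OrdConnected {x : ℝ | sInf (Real.toEReal '' msupp ν) ≤ (x : EReal) ∧
          (x : EReal) ≤ sSup (Real.toEReal '' msupp ν)} := by
        constructor
        intro x hx z hz y hy
        exact ⟨hx.1.trans (EReal.coe_le_coe_iff.2 hy.1),
          (EReal.coe_le_coe_iff.2 hy.2).trans hz.2⟩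
      exact hoc.convex
  · rintro x ⟨h1, h2⟩
    obtain ⟨a, ha, hax⟩ : ∃ a ∈ msupp ν, a ≤ x := by
      by_contra hc
      push_neg at hc
      have hxle : (x : EReal) ≤ sInf (Real.toEReal '' msupp ν) := by
        refine le_sInf ?_
        rintro _ ⟨y, hy, rfl⟩
        exact EReal.coe_le_coe_iff.2 (hc y hy).le
      have heq : sInf (Real.toEReal '' msupp ν) = (x : EReal) := le_antisymm h1 hxle
      obtain ⟨m, hm, hme⟩ := sInf_msupp_mem ν (heq ▸ EReal.coe_ne_bot x)
      have : m = x := EReal.coe_eq_coe_iff.1 (hme.trans heq)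
      exact absurd (this ▸ hm) (fun c => lt_irrefl x (this ▸ hc m c))
    obtain ⟨b, hb, hxb⟩ : ∃ b ∈ msupp ν, x ≤ b := by
      by_contra hc
      push_neg at hc
      have hxle : sSup (Real.toEReal '' msupp ν) ≤ (x : EReal) := by
        refine sSup_le ?_
        rintro _ ⟨y, hy, rfl⟩
        exact EReal.coe_le_coe_iff.2 (hc y hy).le
      have heq : sSup (Real.toEReal '' msupp ν) = (x : EReal) := le_antisymm hxle h2
      obtain ⟨m, hm, hme⟩ := sSup_msupp_mem ν (heq ▸ EReal.coe_ne_top x)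
      have : m = x := EReal.coe_eq_coe_iff.1 (hme.trans heq)
      exact absurd (this ▸ hm) (fun c => lt_irrefl x (this ▸ hc m c))
    have hseg : x ∈ segment ℝ a b := by
      rw [segment_eq_Icc (hax.trans hxb)]
      exact ⟨hax, hxb⟩
    exact (convex_convexHull ℝ (msupp ν)).segment_subset
      (subset_convexHull ℝ _ ha) (subset_convexHull ℝ _ hb) hseg

end

set_option maxHeartbeats 1000000 in
/-- relations between the conditional essential infimum/supremum of a
real random variable and its conditional support. -/
theorem condEssInf_condEssSup_eq_inf_sup_condSupp
    {Ω : Type*} (H : MeasurableSpace Ω) [mΩ : MeasurableSpace Ω] (μ : Measure Ω)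
    [IsProbabilityMeasure μ] [μ.IsComplete] (hHF : H ≤ mΩ)
    (hHcomp : ∀ s : Set Ω, μ s = 0 → MeasurableSet[H] s)
    (X : Ω → ℝ) (hX : Measurable[mΩ] X)
    (κ : Ω → Measure ℝ) (hκ : CondLaw H μ X κ)
    (I S : Ω → EReal) (hI : IsCondEssInf H μ X I) (hS : IsCondEssSup H μ X S) :
    (∀ᵐ ω ∂μ, I ω = sInf (Real.toEReal '' condSupp κ ω)) ∧
    (∀ᵐ ω ∂μ, S ω = sSup (Real.toEReal '' condSupp κ ω)) ∧
    (∀ᵐ ω ∂μ, I ω ≠ ⊥ → I ω ∈ Real.toEReal '' condSupp κ ω) ∧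
    (∀ᵐ ω ∂μ, S ω ≠ ⊤ → S ω ∈ Real.toEReal '' condSupp κ ω) ∧
    (∀ᵐ ω ∂μ, convexHull ℝ (condSupp κ ω) =
      {x : ℝ | I ω ≤ (x : EReal) ∧ (x : EReal) ≤ S ω}) := by

  have hpr := hκ.isProb
  -- X belongs to the conditional support a.s.
  have hXmem : ∀ᵐ ω ∂μ, X ω ∈ condSupp κ ω := by
    have hnull : ∀ r : ℚ × ℚ,
        μ ({ω | κ ω (Ioo (r.1 : ℝ) r.2) = 0} ∩ X ⁻¹' Ioo (r.1 : ℝ) r.2) = 0 := by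
      intro r
      have hB : MeasurableSet[H] {ω | κ ω (Ioo (r.1 : ℝ) r.2) = 0} :=
        (hκ.meas _ measurableSet_Ioo) (measurableSet_singleton 0)
      rw [← hκ.law _ measurableSet_Ioo _ hB]
      have : ∫⁻ ω in {ω | κ ω (Ioo (r.1 : ℝ) r.2) = 0}, κ ω (Ioo (r.1 : ℝ) r.2) ∂μ
          = ∫⁻ _ in {ω | κ ω (Ioo (r.1 : ℝ) r.2) = 0}, 0 ∂μ :=
        setLIntegral_congr_fun (hHF _ hB) (fun ω hω => hω)
      rw [this, lintegral_zero]
    rw [ae_iff]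
    refine measure_mono_null ?_ (measure_iUnion_null hnull)
    intro ω hω
    haveI := hpr ω
    obtain ⟨p, q, hmem, h0⟩ := (not_mem_msupp_iff (κ ω)).1 hω
    exact mem_iUnion.2 ⟨(p, q), h0, hmem⟩
  -- the candidate versions
  set Itil : Ω → EReal := fun ω => sInf (Real.toEReal '' condSupp κ ω) with hItil_def
  set Stil : Ω → EReal := fun ω => sSup (Real.toEReal '' condSupp κ ω) with hStil_def
  have hItil_eq : ∀ ω, Itil ω = ⨅ q : ℚ, gI (κ ω) q := by
    intro ω; haveI := hpr ω; exact sInf_msupp_eq (κ ω)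
  have hStil_eq : ∀ ω, Stil ω = ⨆ q : ℚ, gS (κ ω) q := by
    intro ω; haveI := hpr ω; exact sSup_msupp_eq (κ ω)
  have hmeasItil : Measurable[H] Itil := by
    have : Itil = fun ω => ⨅ q : ℚ, gI (κ ω) q := funext hItil_eq
    rw [this]
    refine Measurable.iInf fun q => ?_
    have hset : MeasurableSet[H] {ω | κ ω (Iio (q : ℝ)) = 0} :=
      (hκ.meas _ measurableSet_Iio) (measurableSet_singleton 0)
    exact Measurable.ite hset measurable_const measurable_const
  have hmeasStil : Measurable[H] Stil := by
    have : Stil = fun ω => ⨆ q : ℚ, gS (κ ω) q := funext hStil_eq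
    rw [this]
    refine Measurable.iSup fun q => ?_
    have hset : MeasurableSet[H] {ω | κ ω (Ioi (q : ℝ)) = 0} :=
      (hκ.meas _ measurableSet_Ioi) (measurableSet_singleton 0)
    exact Measurable.ite hset measurable_const measurable_const
  have hItilX : ∀ᵐ ω ∂μ, Itil ω ≤ (X ω : EReal) :=
    hXmem.mono fun ω h => sInf_le (mem_image_of_mem Real.toEReal h)
  have hXStil : ∀ᵐ ω ∂μ, (X ω : EReal) ≤ Stil ω :=
    hXmem.mono fun ω h => le_sSup (mem_image_of_mem Real.toEReal h)
  have hItilI : ∀ᵐ ω ∂μ, Itil ω ≤ I ω := hI.2.2 Itil hmeasItil hItilX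
  have hSStil : ∀ᵐ ω ∂μ, S ω ≤ Stil ω := hS.2.2 Stil hmeasStil hXStil
  -- I ≤ Itil
  have keyI : ∀ q : ℚ, ∀ᵐ ω ∂μ, ((q : ℝ) : EReal) ≤ I ω → κ ω (Iio (q : ℝ)) = 0 := by
    intro q
    have hB : MeasurableSet[H] {ω | ((q : ℝ) : EReal) ≤ I ω} :=
      measurableSet_le measurable_const hI.1
    have hBF : MeasurableSet {ω | ((q : ℝ) : EReal) ≤ I ω} := hHF _ hB
    have h0 : μ ({ω | ((q : ℝ) : EReal) ≤ I ω} ∩ X ⁻¹' Iio (q : ℝ)) = 0 := by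
      refine measure_mono_null ?_ (ae_iff.1 hI.2.1)
      rintro ω ⟨hωB, hωX⟩ hle
      exact absurd (hωB.trans hle) (not_le.2 (EReal.coe_lt_coe_iff.2 hωX))
    have hint : ∫⁻ ω in {ω | ((q : ℝ) : EReal) ≤ I ω}, κ ω (Iio (q : ℝ)) ∂μ = 0 := by
      rw [hκ.law _ measurableSet_Iio _ hB]; exact h0
    have hmeasf : Measurable (fun ω => κ ω (Iio (q : ℝ))) :=
      (hκ.meas _ measurableSet_Iio).mono hHF le_rfl
    exact (setLIntegral_eq_zero_iff hBF hmeasf).1 hint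
  have keyS : ∀ q : ℚ, ∀ᵐ ω ∂μ, S ω ≤ ((q : ℝ) : EReal) → κ ω (Ioi (q : ℝ)) = 0 := by
    intro q
    have hB : MeasurableSet[H] {ω | S ω ≤ ((q : ℝ) : EReal)} :=
      measurableSet_le hS.1 measurable_const
    have hBF : MeasurableSet {ω | S ω ≤ ((q : ℝ) : EReal)} := hHF _ hB
    have h0 : μ ({ω | S ω ≤ ((q : ℝ) : EReal)} ∩ X ⁻¹' Ioi (q : ℝ)) = 0 := by
      refine measure_mono_null ?_ (ae_iff.1 hS.2.1)
      rintro ω ⟨hωB, hωX⟩ hle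
      exact absurd (hle.trans hωB) (not_le.2 (EReal.coe_lt_coe_iff.2 hωX))
    have hint : ∫⁻ ω in {ω | S ω ≤ ((q : ℝ) : EReal)}, κ ω (Ioi (q : ℝ)) ∂μ = 0 := by
      rw [hκ.law _ measurableSet_Ioi _ hB]; exact h0
    have hmeasf : Measurable (fun ω => κ ω (Ioi (q : ℝ))) :=
      (hκ.meas _ measurableSet_Ioi).mono hHF le_rfl
    exact (setLIntegral_eq_zero_iff hBF hmeasf).1 hint
  have hIItil : ∀ᵐ ω ∂μ, I ω ≤ Itil ω := by
    filter_upwards [ae_all_iff.2 keyI] with ω hω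
    rw [hItil_eq ω]
    refine le_iInf fun q => ?_
    by_cases h : κ ω (Iio (q : ℝ)) = 0
    · rw [gI, if_pos h]; exact le_top
    · rw [gI, if_neg h]
      by_contra hlt
      exact h (hω q (le_of_lt (not_le.1 hlt)))
  have hStilS : ∀ᵐ ω ∂μ, Stil ω ≤ S ω := by
    filter_upwards [ae_all_iff.2 keyS] with ω hω
    rw [hStil_eq ω]
    refine iSup_le fun q => ?_
    by_cases h : κ ω (Ioi (q : ℝ)) = 0
    · rw [gS, if_pos h]; exact bot_le
    · rw [gS, if_neg h]
      by_contra hlt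
      exact h (hω q (le_of_lt (not_le.1 hlt)))
  have c1 : ∀ᵐ ω ∂μ, I ω = sInf (Real.toEReal '' condSupp κ ω) := by
    filter_upwards [hIItil, hItilI] with ω h1 h2
    exact le_antisymm h1 h2
  have c2 : ∀ᵐ ω ∂μ, S ω = sSup (Real.toEReal '' condSupp κ ω) := by
    filter_upwards [hSStil, hStilS] with ω h1 h2
    exact le_antisymm h1 h2
  refine ⟨c1, c2, ?_, ?_, ?_⟩
  · filter_upwards [c1] with ω h1 hne
    haveI := hpr ω
    rw [h1] at hne ⊢
    exact sInf_msupp_mem (κ ω) hne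
  · filter_upwards [c2] with ω h2 hne
    haveI := hpr ω
    rw [h2] at hne ⊢
    exact sSup_msupp_mem (κ ω) hne
  · filter_upwards [c1, c2] with ω h1 h2
    haveI := hpr ω
    rw [h1, h2]
    exact hull_msupp_eq (κ ω)
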